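/- arXiv:2509.07288 — 5 statements merged into one kernel-verified Lean document; each statement's English description precedes it below -/
import Mathlib

section
/- Let H be an r×n matrix over 𝔽₂ and P an r'×r matrix over 𝔽₂, and let d and w be natural numbers. Assume (i) every vector e ∈ 𝔽₂ⁿ with Hamming weight strictly less than d satisfies |H e| ≤ w, and (ii) every nonzero vector s ∈ 𝔽₂^r with P s = 0 has Hamming weight at least w + 1. Then for every e ∈ 𝔽₂ⁿ with P (H e) = 0, either H e = 0 or the Hamming weight of e is at least d. -/
/-- **Compressed syndromes (Theorem 1).** If every error of Hamming weight
less than `d` has syndrome (w.r.t. `H`) of weight at most `w`, and `P` is the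
parity check matrix of a code of distance at least `w + 1`, then any error `e`
with `P (H e) = 0` either has trivial syndrome `H e = 0` or weight at least `d`. -/
theorem compressed_syndrome_detectability
    (r n r' d w : ℕ)
    (H : Matrix (Fin r) (Fin n) (ZMod 2))
    (P : Matrix (Fin r') (Fin r) (ZMod 2))
    (hsyn : ∀ e : Fin n → ZMod 2, hammingNorm e < d → hammingNorm (H.mulVec e) ≤ w)
    (hdist : ∀ s : Fin r → ZMod 2, s ≠ 0 → P.mulVec s = 0 → w + 1 ≤ hammingNorm s) :
    ∀ e : Fin n → ZMod 2, P.mulVec (H.mulVec e) = 0 →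
      H.mulVec e = 0 ∨ d ≤ hammingNorm e := by
  intro e hPe
  by_contra h
  push_neg at h
  obtain ⟨hHe, hd⟩ := h
  exact absurd (hsyn e hd) (by have := hdist _ hHe hPe; omega)
end

section
/- Let H be an r×n matrix over 𝔽₂, let d = 2t + 1, and let P be an r'×r matrix over 𝔽₂. Assume (i) every vector e ∈ 𝔽₂ⁿ with Hamming weight strictly less than d satisfies |H e| ≤ w, and (ii) every nonzero vector s ∈ 𝔽₂^r with P s = 0 has Hamming weight at least w + 1. Then any two vectors e₁, e₂ ∈ 𝔽₂ⁿ each of Hamming weight at most t that satisfy P (H e₁) = P (H e₂) also satisfy H e₁ = H e₂; that is, the compressed measurements P H distinguish the syndromes of all errors of weight at most t. -/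
/-- **Compressed measurements distinguish low-weight errors.** With `d = 2t + 1`,
if every error of weight less than `d` has syndrome of weight at most `w`
(w.r.t. `H`), and `P` is a parity check matrix of distance at least `w + 1`,
then any two errors of weight at most `t` with equal compressed syndromes
`P (H e₁) = P (H e₂)` have equal syndromes `H e₁ = H e₂`. -/
theorem compressed_syndrome_distinguishes
    (r n r' t w : ℕ)
    (H : Matrix (Fin r) (Fin n) (ZMod 2))
    (P : Matrix (Fin r') (Fin r) (ZMod 2))
    (hsyn : ∀ e : Fin n → ZMod 2, hammingNorm e < 2 * t + 1 →
      hammingNorm (H.mulVec e) ≤ w)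
    (hdist : ∀ s : Fin r → ZMod 2, s ≠ 0 → P.mulVec s = 0 → w + 1 ≤ hammingNorm s) :
    ∀ e₁ e₂ : Fin n → ZMod 2, hammingNorm e₁ ≤ t → hammingNorm e₂ ≤ t →
      P.mulVec (H.mulVec e₁) = P.mulVec (H.mulVec e₂) →
      H.mulVec e₁ = H.mulVec e₂ := by
  intro e₁ e₂ h₁ h₂ hPeq
  by_contra hne
  set s : Fin r → ZMod 2 := H.mulVec e₁ - H.mulVec e₂ with hs
  have hsne : s ≠ 0 := sub_ne_zero.mpr hne
  have hPs : P.mulVec s = 0 := by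
    rw [hs, Matrix.mulVec_sub, hPeq, sub_self]
  have hlow : hammingNorm (e₁ - e₂) < 2 * t + 1 := by
    have := hammingDist_triangle e₁ 0 e₂
    simp only [hammingDist_zero_right, hammingDist_zero_left] at this
    have h := hammingDist_eq_hammingNorm e₂ e₁
    rw [neg_add_eq_sub, hammingDist_comm] at h
    omega
  have hle : hammingNorm s ≤ w := by
    have := hsyn (e₁ - e₂) hlow
    rwa [Matrix.mulVec_sub] at this
  have := hdist s hsne hPs
  omega
end

section
/- Let H be an r×n matrix over 𝔽₂ with rows h₁, …, h_r, and let γ be a positive natural number. Consider γ rounds of measurements, where round j measures h₁, …, h_r in order. Let e₀ ∈ 𝔽₂ⁿ be the initial data error, let δ(j,i) ∈ 𝔽₂ⁿ be the data error occurring immediately before measurement i of round j, and let f(j,i) ∈ 𝔽₂ be the flip on the outcome of measurement i of round j. Define the cumulative data error before measurement i of round j as c(j,i) = e₀ + Σ δ(j',i') over all pairs (j',i') lexicographically at most (j,i), the observed outcome o(j,i) = ⟨h_i, c(j,i)⟩ + f(j,i), and the accumulated data error up to round j as ē^j = e₀ + Σ_{j' < j} Σ_i δ(j',i). If o(j,i)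 = 0 for all j and i (the error is undetectable) and H ē^j ≠ 0 for every round j, then the total error weight Σ_{j,i} |δ(j,i)| + #{(j,i) : f(j,i) = 1} is at least γ. -/
/-- **Undetectable errors over `γ` repeated rounds (Lemma 1).**
Measuring the rows `h₁, …, h_r` of `H` in order in each of `γ` rounds, with
data error `δ j i` occurring immediately before measurement `i` of round `j`,
outcome flips `f j i`, and initial data error `e₀`: if every observed outcome
is `0` while for every round `j` the accumulated data error `ē^j` satisfies
`H ē^j ≠ 0`, then the total error weight is at least `γ`. -/
theorem undetectable_error_weight
    (r n γ : ℕ)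
    (H : Matrix (Fin r) (Fin n) (ZMod 2))
    (e₀ : Fin n → ZMod 2)
    (δ : Fin γ → Fin r → Fin n → ZMod 2)
    (f : Fin γ → Fin r → ZMod 2)
    -- the cumulative data error before measurement `i` of round `j`
    (cum : Fin γ → Fin r → Fin n → ZMod 2)
    (hcum : ∀ j i, cum j i =
      e₀ + ∑ p ∈ Finset.univ.filter
        (fun p : Fin γ × Fin r => p.1 < j ∨ (p.1 = j ∧ p.2 ≤ i)), δ p.1 p.2)
    -- every observed outcome is zero (the error is undetectable)
    (hundet : ∀ j i, dotProduct (H i) (cum j i) + f j i = 0)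
    -- the accumulated data error up to round `j` never lies in the kernel of `H`
    (hacc : ∀ j : Fin γ,
      H.mulVec (e₀ + ∑ p ∈ Finset.univ.filter
        (fun p : Fin γ × Fin r => p.1 < j), δ p.1 p.2) ≠ 0) :
    γ ≤ (∑ j, ∑ i, hammingNorm (δ j i)) +
      (Finset.univ.filter fun p : Fin γ × Fin r => f p.1 p.2 = 1).card := by
  classical
  have hcard : (Finset.univ.filter fun p : Fin γ × Fin r => f p.1 p.2 = 1).card
      = ∑ j, ∑ i, (if f j i = 1 then 1 else 0) := by
    rw [Finset.card_filter]
    exact Fintype.sum_prod_type _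
  rw [hcard, ← Finset.sum_add_distrib]
  have hγ : γ = ∑ _j : Fin γ, 1 := by simp
  conv_lhs => rw [hγ]
  apply Finset.sum_le_sum
  intro j _
  by_contra hlt
  push_neg at hlt
  have hA : ∑ i, hammingNorm (δ j i) = 0 := by omega
  have hB : ∑ i, (if f j i = 1 then 1 else 0) = 0 := by omega
  have h1 : ∀ i, δ j i = 0 := by
    intro i
    have := (Finset.sum_eq_zero_iff.mp hA) i (Finset.mem_univ i)
    exact hammingNorm_eq_zero.mp this
  have h2 : ∀ i, f j i = 0 := by
    intro i
    have := (Finset.sum_eq_zero_iff.mp hB) i (Finset.mem_univ i)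
    have hne : f j i ≠ 1 := by
      intro h; simp [h] at this
    revert hne
    generalize f j i = x
    revert x
    decide
  apply hacc j
  funext i
  have hcumeq : cum j i = e₀ + ∑ p ∈ Finset.univ.filter
      (fun p : Fin γ × Fin r => p.1 < j), δ p.1 p.2 := by
    rw [hcum]
    congr 1
    refine (Finset.sum_subset ?_ ?_).symm
    · intro p hp
      simp only [Finset.mem_filter] at hp ⊢
      exact ⟨hp.1, Or.inl hp.2⟩
    · intro p hp hnp
      simp only [Finset.mem_filter, Finset.mem_univ, true_and] at hp hnp
      rcases hp with h | ⟨he, _⟩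
      · exact absurd h hnp
      · rw [he]; exact h1 p.2
  have h0 := hundet j i
  rw [hcumeq, h2 i, add_zero] at h0
  simpa [Matrix.mulVec] using h0
end

section
/- Let P' be an r'×(r − r') matrix over 𝔽₂, let P_c = [I | P'] be the r'×r matrix over 𝔽₂ whose left block is the r'×r' identity matrix, and let w' be a natural number. Assume every nonzero x ∈ 𝔽₂^r with P_c x = 0 has Hamming weight at least 2w' + 1. Let s ∈ 𝔽₂^r and u ∈ 𝔽₂^{r'} satisfy |s| + |u| ≤ w'. Then there is exactly one vector v ∈ 𝔽₂^r of minimum Hamming weight among all vectors satisfying P_c v = P_c s + u, and this v satisfies Hamming distance from s at most |u|. -/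
/-- **Two-step decoder core.** Let `P_c = [I | P']` be a canonical-form parity
check matrix whose nonzero kernel vectors all have weight at least `2w' + 1`.
If `|s| + |u| ≤ w'`, then there is exactly one vector `v` of minimum Hamming
weight among all vectors with `P_c v = P_c s + u`, and this `v` is within
Hamming distance `|u|` of `s`. -/
theorem two_step_decoder_minimum_weight
    (r' m w' : ℕ)
    (P' : Matrix (Fin r') (Fin m) (ZMod 2))
    (hker : ∀ x : (Fin r' ⊕ Fin m) → ZMod 2, x ≠ 0 →
      (Matrix.fromCols (1 : Matrix (Fin r') (Fin r') (ZMod 2)) P').mulVec x = 0 →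
      2 * w' + 1 ≤ hammingNorm x)
    (s : (Fin r' ⊕ Fin m) → ZMod 2) (u : Fin r' → ZMod 2)
    (hwt : hammingNorm s + hammingNorm u ≤ w') :
    ∃ v : (Fin r' ⊕ Fin m) → ZMod 2,
      ((Matrix.fromCols (1 : Matrix (Fin r') (Fin r') (ZMod 2)) P').mulVec v =
          (Matrix.fromCols (1 : Matrix (Fin r') (Fin r') (ZMod 2)) P').mulVec s + u ∧
        ∀ v' : (Fin r' ⊕ Fin m) → ZMod 2,
          (Matrix.fromCols (1 : Matrix (Fin r') (Fin r') (ZMod 2)) P').mulVec v' =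
            (Matrix.fromCols (1 : Matrix (Fin r') (Fin r') (ZMod 2)) P').mulVec s + u →
          hammingNorm v ≤ hammingNorm v') ∧
      hammingDist v s ≤ hammingNorm u ∧
      (∀ v' : (Fin r' ⊕ Fin m) → ZMod 2,
        ((Matrix.fromCols (1 : Matrix (Fin r') (Fin r') (ZMod 2)) P').mulVec v' =
            (Matrix.fromCols (1 : Matrix (Fin r') (Fin r') (ZMod 2)) P').mulVec s + u ∧
          ∀ v'' : (Fin r' ⊕ Fin m) → ZMod 2,
            (Matrix.fromCols (1 : Matrix (Fin r') (Fin r') (ZMod 2)) P').mulVec v'' =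
              (Matrix.fromCols (1 : Matrix (Fin r') (Fin r') (ZMod 2)) P').mulVec s + u →
            hammingNorm v' ≤ hammingNorm v'') →
        v' = v) := by
  set Pc := Matrix.fromCols (1 : Matrix (Fin r') (Fin r') (ZMod 2)) P' with hPc
  set e : (Fin r' ⊕ Fin m) → ZMod 2 := Sum.elim u 0 with he
  set v := s + e with hv
  have hPe : Pc.mulVec e = u := by
    rw [he, hPc, Matrix.fromCols_mulVec_sumElim, Matrix.one_mulVec,
      Matrix.mulVec_zero, add_zero]
  have hsyn : Pc.mulVec v = Pc.mulVec s + u := by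
    rw [hv, Matrix.mulVec_add, hPe]
  have heu : hammingNorm e ≤ hammingNorm u := by
    have hsub : ({i | e i ≠ 0} : Finset (Fin r' ⊕ Fin m)) ⊆
        ({a | u a ≠ 0} : Finset (Fin r')).image Sum.inl := by
      intro i hi
      simp only [Finset.mem_filter, Finset.mem_univ, true_and] at hi
      cases i with
      | inl a =>
        simp only [Finset.mem_image, Finset.mem_filter, Finset.mem_univ, true_and]
        exact ⟨a, by simpa [he] using hi, rfl⟩
      | inr b => simp [he] at hi
    calc hammingNorm e ≤ (({a | u a ≠ 0} : Finset (Fin r')).image Sum.inl).card :=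
          Finset.card_le_card hsub
      _ = hammingNorm u := Finset.card_image_of_injective _ Sum.inl_injective
  have hvnorm : hammingNorm v ≤ w' := by
    calc hammingNorm v = hammingDist v 0 := (hammingDist_zero_right v).symm
      _ ≤ hammingDist v s + hammingDist s 0 := hammingDist_triangle _ _ _
      _ = hammingNorm e + hammingNorm s := by
          rw [hammingDist_zero_right, hammingDist_eq_hammingNorm, hv]
          simp [show -e = e from funext fun i => ZMod.neg_eq_self_mod_two _]
      _ ≤ hammingNorm u + hammingNorm s := by omega
      _ ≤ w' := by omega
  have key : ∀ v' : (Fin r' ⊕ Fin m) → ZMod 2,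
      Pc.mulVec v' = Pc.mulVec s + u → hammingNorm v' ≤ w' → v' = v := by
    intro v' hv' hn
    by_contra hne
    have hd : v' - v ≠ 0 := sub_ne_zero.mpr hne
    have hk : Pc.mulVec (v' - v) = 0 := by
      rw [Matrix.mulVec_sub, hv', hsyn, sub_self]
    have := hker _ hd hk
    have : 2 * w' + 1 ≤ hammingNorm v' + hammingNorm v := by
      calc 2 * w' + 1 ≤ hammingNorm (v' - v) := this
        _ = hammingDist v' v := by rw [hammingDist_comm, hammingDist_eq_hammingNorm, neg_add_eq_sub]
        _ ≤ hammingDist v' 0 + hammingDist 0 v := hammingDist_triangle _ _ _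
        _ = hammingNorm v' + hammingNorm v := by
            rw [hammingDist_zero_right, hammingDist_zero_left]
    omega
  have hmin : ∀ v' : (Fin r' ⊕ Fin m) → ZMod 2,
      Pc.mulVec v' = Pc.mulVec s + u → hammingNorm v ≤ hammingNorm v' := by
    intro v' hv'
    by_contra hlt
    push_neg at hlt
    have : v' = v := key v' hv' (le_of_lt (lt_of_lt_of_le hlt hvnorm))
    simp [this] at hlt
  refine ⟨v, ⟨hsyn, hmin⟩, ?_, ?_⟩
  · rw [hammingDist_eq_hammingNorm, hv]; simpa [show -e = e from funext fun i => ZMod.neg_eq_self_mod_two _] using heu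
  · intro v' ⟨hv', hopt⟩
    exact key v' hv' (le_trans (hopt v hsyn) hvnorm)
end

section
/- Let F be a field, let n and t be natural numbers, and let x : Fin n → F be an injective function with x_j ≠ 0 for every j. Let v : Fin n → F be a nonzero vector such that Σ_j v_j · (x_j)^{i} = 0 for every exponent i with 1 ≤ i ≤ 2t. Then v has at least 2t + 1 nonzero coordinates. -/
set_option maxHeartbeats 800000


/-- **BCH distance property.** If `x : Fin n → F` takes pairwise distinct
nonzero values and the nonzero vector `v` satisfies the BCH parity checks
`∑ j, v j * (x j) ^ i = 0` for all `1 ≤ i ≤ 2t`, then `v` has at least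
`2t + 1` nonzero coordinates. -/
theorem bch_distance
    (F : Type*) [Field F] [DecidableEq F]
    (n t : ℕ)
    (x : Fin n → F) (hinj : Function.Injective x) (hx : ∀ j, x j ≠ 0)
    (v : Fin n → F) (hv : v ≠ 0)
    (hchk : ∀ i : ℕ, 1 ≤ i → i ≤ 2 * t → ∑ j, v j * (x j) ^ i = 0) :
    2 * t + 1 ≤ hammingNorm v := by
  by_contra hcon
  push_neg at hcon
  have hle : hammingNorm v ≤ 2 * t := Nat.lt_succ_iff.mp hcon

  set s : Finset (Fin n) := {j | v j ≠ 0} with hs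
  have hcard : s.card = hammingNorm v := rfl
  have e : Fin s.card ≃ s := s.equivFin.symm
  set m := s.card with hm
  set u : Fin m → F := fun i => x (e i) with hu
  have huinj : Function.Injective u := by
    intro a b hab
    exact e.injective (Subtype.coe_injective (hinj hab))
  set M : Matrix (Fin m) (Fin m) F := fun i j => u j ^ (i.1 + 1) with hM
  have hMt : M.transpose = Matrix.diagonal u * Matrix.vandermonde u := by
    ext i j
    simp [hM, Matrix.transpose_apply, Matrix.diagonal_mul, Matrix.vandermonde,
      pow_succ, mul_comm]
    rfl
  have hdet : M.det ≠ 0 := by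
    rw [← Matrix.det_transpose, hMt, Matrix.det_mul, Matrix.det_diagonal]
    refine mul_ne_zero (Finset.prod_ne_zero_iff.mpr fun i _ => hx _) ?_
    exact (Matrix.det_vandermonde_ne_zero_iff).mpr huinj
  set w : Fin m → F := fun j => v (e j) with hw
  have hmul : M.mulVec w = 0 := by
    funext i
    have hi1 : i.1 + 1 ≤ 2 * t := by
      have := i.2
      omega
    have := hchk (i.1 + 1) (Nat.le_add_left 1 _) hi1
    calc M.mulVec w i = ∑ j : Fin m, v (e j) * x (e j) ^ (i.1 + 1) := by
          simp [Matrix.mulVec, dotProduct, hM, hw, hu, mul_comm]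
      _ = ∑ a : s, v a * x a ^ (i.1 + 1) := (by exact Equiv.sum_comp e (fun a => v a * x a ^ (i.1+1)))
      _ = ∑ j ∈ s, v j * x j ^ (i.1 + 1) := (by exact Finset.sum_coe_sort s (fun j => v j * x j ^ (i.1+1)))
      _ = ∑ j, v j * x j ^ (i.1 + 1) := by
          refine Finset.sum_subset (Finset.subset_univ _) fun j _ hj => ?_
          have : v j = 0 := by
            by_contra hvj
            exact hj (by simp [hs, hvj])
          simp [this]
      _ = 0 := this
  have hw0 : w = 0 := Matrix.eq_zero_of_mulVec_eq_zero hdet hmul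
  obtain ⟨j, hj⟩ : ∃ j, v j ≠ 0 := Function.ne_iff.mp hv
  have hjs : j ∈ s := by simp [hs, hj]
  have : w (e.symm ⟨j, hjs⟩) = v j := by simp [hw]
  rw [hw0] at this
  exact hj (by simpa using this.symm)
end
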